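/- Let (Ω, μ) be a measure space, let κ : Ω → ℝ^{d×d} be a matrix-valued function and u : Ω → ℝ^d a vector-valued function, both square-integrable with respect to μ. Define β = ∫_Ω κ(y)u(y) μ(dy) ∈ ℝ^d and q = ∫_Ω κ(y)κ(y)ᵀ μ(dy) ∈ ℝ^{d×d}, and assume that q is positive definite. Then βᵀ q⁻¹ β ≤ ∫_Ω ‖u(y)‖² μ(dy). -/

import Mathlib

open MeasureTheory Matrix

/-- **Hölder-type inequality for matrix-valued integrals** (Lemma `HolderInequality`).
Let `(Ω, μ)` be a measure space, `κ : Ω → ℝ^{d×d}` matrix-valued and `u : Ω → ℝ^d`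
vector-valued, both square-integrable with respect to `μ`.  With
`β = ∫ κ(y) u(y) μ(dy)` and `q = ∫ κ(y) κ(y)ᵀ μ(dy)` positive definite, one has
`βᵀ q⁻¹ β ≤ ∫ ‖u(y)‖² μ(dy)`. -/
theorem holder_inequality_for_matrix_integrals
    {d : ℕ} {Ω : Type*} [MeasurableSpace Ω] (μ : Measure Ω)
    (κ : Ω → Matrix (Fin d) (Fin d) ℝ) (u : Ω → Fin d → ℝ)
    (hκ : ∀ i j, MemLp (fun y => κ y i j) 2 μ)
    (hu : ∀ i, MemLp (fun y => u y i) 2 μ)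
    (β : Fin d → ℝ) (hβ : β = fun i => ∫ y, (κ y).mulVec (u y) i ∂μ)
    (q : Matrix (Fin d) (Fin d) ℝ) (hq : q = Matrix.of fun i j => ∫ y, (κ y * (κ y)ᵀ) i j ∂μ)
    (hqpos : q.PosDef) :
    β ⬝ᵥ q⁻¹.mulVec β ≤ ∫ y, ∑ i, (u y i) ^ 2 ∂μ := by
  classical
  have hmul : ∀ {f g : Ω → ℝ}, MemLp f 2 μ → MemLp g 2 μ →
      Integrable (fun y => f y * g y) μ := by
    intro f g hf hg
    exact memLp_one_iff_integrable.mp (hg.smul (r := 1) hf (hpqr := ⟨by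
      rw [ENNReal.inv_two_add_inv_two, inv_one]⟩))
  set ξ : Fin d → ℝ := q⁻¹.mulVec β with hξ
  have hdet : IsUnit q.det := isUnit_iff_ne_zero.mpr hqpos.det_pos.ne'
  have hqξ : q.mulVec ξ = β := by
    rw [hξ, Matrix.mulVec_mulVec, Matrix.mul_nonsing_inv q hdet, Matrix.one_mulVec]
  set v : Ω → Fin d → ℝ := fun y i => ∑ j, κ y j i * ξ j with hv
  have hvL2 : ∀ i, MemLp (fun y => v y i) 2 μ := by
    intro i
    have h := memLp_finset_sum' (μ := μ) (p := 2) Finset.univ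
      (f := fun j y => κ y j i * ξ j) (fun j _ => by
        simpa [mul_comm] using (hκ j i).const_mul (ξ j))
    convert h using 1; funext y; simp [Finset.sum_apply, hv]
  have hIuv : ∀ i, Integrable (fun y => u y i * v y i) μ := fun i => hmul (hu i) (hvL2 i)
  have hIvv : ∀ i, Integrable (fun y => v y i * v y i) μ := fun i => hmul (hvL2 i) (hvL2 i)
  have hIuu : ∀ i, Integrable (fun y => u y i * u y i) μ := fun i => hmul (hu i) (hu i)
  -- β components
  have hβ' : ∀ j, β j = ∑ i, ∫ y, κ y j i * u y i ∂μ := by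
    intro j
    rw [hβ]
    simp only [Matrix.mulVec, dotProduct]
    rw [integral_finset_sum _ (fun i _ => hmul (hκ j i) (hu i))]
  -- q components
  have hq' : ∀ j k, q j k = ∑ i, ∫ y, κ y j i * κ y k i ∂μ := by
    intro j k
    rw [hq]
    simp only [Matrix.of_apply, Matrix.mul_apply, Matrix.transpose_apply]
    rw [integral_finset_sum _ (fun i _ => hmul (hκ j i) (hκ k i))]
  -- the cross term
  have hB : ∀ i, ∫ y, u y i * v y i ∂μ = ∑ j, (∫ y, κ y j i * u y i ∂μ) * ξ j := by
    intro i
    calc ∫ y, u y i * v y i ∂μ = ∫ y, ∑ j, (κ y j i * u y i) * ξ j ∂μ := by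
          congr 1; funext y; rw [hv, Finset.mul_sum]
          exact Finset.sum_congr rfl fun j _ => by ring
      _ = ∑ j, ∫ y, (κ y j i * u y i) * ξ j ∂μ :=
          integral_finset_sum _ (fun j _ => (hmul (hκ j i) (hu i)).mul_const _)
      _ = ∑ j, (∫ y, κ y j i * u y i ∂μ) * ξ j :=
          Finset.sum_congr rfl fun j _ => integral_mul_const _ _
  have hSB : ∑ i, ∫ y, u y i * v y i ∂μ = β ⬝ᵥ ξ := by
    simp_rw [hB]
    rw [Finset.sum_comm, dotProduct]
    exact Finset.sum_congr rfl fun j _ => by rw [hβ', Finset.sum_mul]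
  -- the quadratic term
  have hC : ∀ i, ∫ y, v y i * v y i ∂μ
      = ∑ j, ∑ k, (∫ y, κ y j i * κ y k i ∂μ) * (ξ j * ξ k) := by
    intro i
    calc ∫ y, v y i * v y i ∂μ
        = ∫ y, ∑ j, ∑ k, (κ y j i * κ y k i) * (ξ j * ξ k) ∂μ := by
          congr 1; funext y; rw [hv, Finset.sum_mul_sum]
          exact Finset.sum_congr rfl fun j _ => Finset.sum_congr rfl fun k _ => by ring
      _ = ∑ j, ∫ y, ∑ k, (κ y j i * κ y k i) * (ξ j * ξ k) ∂μ :=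
          integral_finset_sum _ (fun j _ => integrable_finset_sum _
            (fun k _ => (hmul (hκ j i) (hκ k i)).mul_const _))
      _ = ∑ j, ∑ k, ∫ y, (κ y j i * κ y k i) * (ξ j * ξ k) ∂μ :=
          Finset.sum_congr rfl fun j _ => integral_finset_sum _
            (fun k _ => (hmul (hκ j i) (hκ k i)).mul_const _)
      _ = ∑ j, ∑ k, (∫ y, κ y j i * κ y k i ∂μ) * (ξ j * ξ k) :=
          Finset.sum_congr rfl fun j _ => Finset.sum_congr rfl fun k _ =>
            integral_mul_const _ _
  have hSC : ∑ i, ∫ y, v y i * v y i ∂μ = β ⬝ᵥ ξ := by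
    have h1 : ∑ i, ∫ y, v y i * v y i ∂μ = ξ ⬝ᵥ q.mulVec ξ := by
      simp_rw [hC]
      rw [Finset.sum_comm, dotProduct]
      refine Finset.sum_congr rfl fun j _ => ?_
      rw [Finset.sum_comm, Matrix.mulVec, dotProduct, Finset.mul_sum]
      refine Finset.sum_congr rfl fun k _ => ?_
      rw [← Finset.sum_mul, hq']
      ring
    rw [h1, hqξ, dotProduct_comm]
  -- expansion of the square
  have hexp : ∀ i, ∫ y, (u y i - v y i) ^ 2 ∂μ
      = ∫ y, u y i * u y i ∂μ - 2 * ∫ y, u y i * v y i ∂μ + ∫ y, v y i * v y i ∂μ := by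
    intro i
    have h : (fun y => (u y i - v y i) ^ 2)
        = fun y => (u y i * u y i - 2 * (u y i * v y i)) + v y i * v y i :=
      funext fun y => by ring
    have i1 : Integrable (fun y => u y i * u y i - 2 * (u y i * v y i)) μ :=
      (hIuu i).sub ((hIuv i).const_mul 2)
    rw [h, integral_add i1 (hIvv i), integral_sub (hIuu i) ((hIuv i).const_mul 2),
      MeasureTheory.integral_const_mul]
  have hI : ∫ y, ∑ i, (u y i) ^ 2 ∂μ = ∑ i, ∫ y, u y i * u y i ∂μ := by
    rw [integral_finset_sum _ (fun i _ => (hu i).integrable_sq)]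
    exact Finset.sum_congr rfl fun i _ => by congr 1; funext y; ring
  have hnn : (0:ℝ) ≤ ∑ i, ∫ y, (u y i - v y i) ^ 2 ∂μ :=
    Finset.sum_nonneg fun i _ => integral_nonneg fun y => sq_nonneg _
  have key : ∑ i, ∫ y, (u y i - v y i) ^ 2 ∂μ
      = (∫ y, ∑ i, (u y i) ^ 2 ∂μ) - β ⬝ᵥ ξ := by
    simp_rw [hexp]
    rw [Finset.sum_add_distrib, Finset.sum_sub_distrib, ← Finset.mul_sum, hSB, hSC, hI]
    ring
  linarith
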